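/- Let V be the valuation ring of v on L and W the valuation ring of the Gauss extension w of v to L(Y). Then the residue field of W is a simple transcendental extension of the residue field of V, generated by the residue of Y. -/

import Mathlib

open Polynomial IsLocalRing

section GaussAux

variable {L : Type*} [Field L] {Γ : Type*} [LinearOrderedCommGroupWithZero Γ]
  (v : Valuation L Γ) (w : Valuation (RatFunc L) Γ)

theorem gauss_aux_unit {K : Type*} [Field K] (u : Valuation K Γ)
    (a : u.valuationSubring) (h : u a = 1) : IsUnit a := by
  have ha : (a : K) ≠ 0 := by
    intro c; rw [c, u.map_zero] at h; exact zero_ne_one h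
  have hinv : (a : K)⁻¹ ∈ u.valuationSubring := by
    rw [Valuation.mem_valuationSubring_iff, map_inv₀, h, inv_one]
  apply IsUnit.of_mul_eq_one (a := a) ⟨(a : K)⁻¹, hinv⟩
  ext
  exact mul_inv_cancel₀ ha

theorem gauss_aux_unit' {K : Type*} [Field K] (u : Valuation K Γ)
    (a : u.valuationSubring) (h : IsUnit a) : u a = 1 := by
  obtain ⟨a', ha'⟩ := h.exists_right_inv
  have hval : u a * u a' = 1 := by
    rw [← map_mul]
    have : ((a * a' : u.valuationSubring) : K) = 1 := by rw [ha']; rfl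
    rw [show ((a : K) * (a' : K)) = ((a * a' : u.valuationSubring) : K) from rfl, this, map_one]
  refine le_antisymm a.2 ?_
  calc (1 : Γ) = u a * u a' := hval.symm
    _ ≤ u a * 1 := mul_le_mul_right a'.2 _
    _ = u a := mul_one _

section
variable (hw : ∀ (f : Polynomial L) (hf : f ≠ 0),
        w (algebraMap (Polynomial L) (RatFunc L) f)
          = f.support.sup' (Polynomial.support_nonempty.mpr hf)
              fun i => v (f.coeff i))
include hw

theorem gauss_aux_hwL (x : L) : w (algebraMap L (RatFunc L) x) = v x := by
  rcases eq_or_ne x 0 with rfl | hx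
  · simp
  · have h := hw (C x) (by simpa using hx)
    have hsup : (C x).support = {0} := Polynomial.support_C hx
    rw [IsScalarTower.algebraMap_apply L (Polynomial L) (RatFunc L), Polynomial.algebraMap_eq, h]
    apply le_antisymm
    · refine Finset.sup'_le _ _ fun i hi => ?_
      rw [hsup, Finset.mem_singleton] at hi
      subst hi; simp
    · have h0 : (0 : ℕ) ∈ (C x).support := by rw [hsup]; simp
      have := Finset.le_sup' (f := fun i => v ((C x).coeff i)) h0
      simp only [Polynomial.coeff_C_zero] at this; exact this

theorem gauss_aux_wle (F : Polynomial L) (hF : ∀ i, v (F.coeff i) ≤ 1) :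
    w (algebraMap (Polynomial L) (RatFunc L) F) ≤ 1 := by
  rcases eq_or_ne F 0 with rfl | h
  · simp
  · rw [hw F h]
    exact Finset.sup'_le _ _ fun i _ => hF i

theorem gauss_aux_coeff_le (F : Polynomial L)
    (h : w (algebraMap (Polynomial L) (RatFunc L) F) ≤ 1) (i : ℕ) : v (F.coeff i) ≤ 1 := by
  rcases eq_or_ne F 0 with rfl | h0
  · simp
  · by_cases hi : i ∈ F.support
    · rw [hw F h0] at h
      exact le_trans (Finset.le_sup' (fun i => v (F.coeff i)) hi) h
    · simp [Polynomial.notMem_support_iff.mp hi]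

variable (ι : v.valuationSubring →+* w.valuationSubring) [IsLocalHom ι]
    (hι : ∀ a : v.valuationSubring, (ι a : RatFunc L) = algebraMap L (RatFunc L) ↑a)
    (hY : RatFunc.X ∈ w.valuationSubring)

include hι in
theorem gauss_aux_residue_poly (F : Polynomial L) (hF : ∀ i, v (F.coeff i) ≤ 1)
    (n : ℕ) (hn : F.natDegree < n) :
    IsLocalRing.residue w.valuationSubring
        ⟨algebraMap (Polynomial L) (RatFunc L) F, gauss_aux_wle v w hw F hF⟩
      = ∑ i ∈ Finset.range n,
          IsLocalRing.ResidueField.map ι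
              (IsLocalRing.residue v.valuationSubring ⟨F.coeff i, hF i⟩)
            * (IsLocalRing.residue w.valuationSubring ⟨RatFunc.X, hY⟩) ^ i := by
  have key : (⟨algebraMap (Polynomial L) (RatFunc L) F, gauss_aux_wle v w hw F hF⟩
        : w.valuationSubring)
      = ∑ i ∈ Finset.range n, ι ⟨F.coeff i, hF i⟩ * (⟨RatFunc.X, hY⟩ : w.valuationSubring) ^ i := by
    ext
    push_cast [hι]
    conv_lhs => rw [F.as_sum_range' n hn]
    rw [map_sum]
    refine Finset.sum_congr rfl fun i _ => ?_
    rw [← Polynomial.C_mul_X_pow_eq_monomial, map_mul, map_pow,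
      ← Polynomial.algebraMap_eq, ← IsScalarTower.algebraMap_apply L (Polynomial L) (RatFunc L),
      RatFunc.algebraMap_X]
  rw [key, map_sum]
  refine Finset.sum_congr rfl fun i _ => ?_
  rw [map_mul, map_pow, IsLocalRing.ResidueField.map_residue]

include hι in
theorem gauss_aux_residue_poly_mem (F : Polynomial L) (hF : ∀ i, v (F.coeff i) ≤ 1) :
    IsLocalRing.residue w.valuationSubring
        ⟨algebraMap (Polynomial L) (RatFunc L) F, gauss_aux_wle v w hw F hF⟩
      ∈ IntermediateField.adjoin ((IsLocalRing.ResidueField.map ι).fieldRange)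
          {IsLocalRing.residue ↥(w.valuationSubring) ⟨RatFunc.X, hY⟩} := by
  rw [gauss_aux_residue_poly v w hw ι hι hY F hF (F.natDegree + 1) (Nat.lt_succ_self _)]
  refine Subfield.sum_mem _ fun i _ => ?_
  refine mul_mem ?_ (pow_mem ?_ i)
  · have hk : IsLocalRing.ResidueField.map ι
        (IsLocalRing.residue v.valuationSubring ⟨F.coeff i, hF i⟩)
        ∈ (IsLocalRing.ResidueField.map ι).fieldRange := ⟨_, rfl⟩
    exact IntermediateField.algebraMap_mem
      (IntermediateField.adjoin ((IsLocalRing.ResidueField.map ι).fieldRange)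
        {IsLocalRing.residue ↥(w.valuationSubring) ⟨RatFunc.X, hY⟩}) ⟨_, hk⟩
  · exact IntermediateField.subset_adjoin _ _ rfl

end

end GaussAux

set_option maxHeartbeats 1600000 in
theorem gauss_extension_residue_field_simple_transcendental
    (L : Type*) [Field L] (Γ : Type*) [LinearOrderedCommGroupWithZero Γ]
    (v : Valuation L Γ)
    (w : Valuation (RatFunc L) Γ)
    (hw : ∀ (f : Polynomial L) (hf : f ≠ 0),
        w (algebraMap (Polynomial L) (RatFunc L) f)
          = f.support.sup' (Polynomial.support_nonempty.mpr hf)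
              fun i => v (f.coeff i))
    -- `ι` is the inclusion of the valuation ring `V` of `v` into the valuation ring `W`
    -- of `w`, induced by the inclusion `L ⊆ L(Y)`:
    (ι : v.valuationSubring →+* w.valuationSubring) [IsLocalHom ι]
    (hι : ∀ a : v.valuationSubring, (ι a : RatFunc L) = algebraMap L (RatFunc L) ↑a)
    -- `Y` belongs to `W`:
    (hY : RatFunc.X ∈ w.valuationSubring) :
    Transcendental ((IsLocalRing.ResidueField.map ι).fieldRange)
        (IsLocalRing.residue ↥(w.valuationSubring) ⟨RatFunc.X, hY⟩) ∧
    IntermediateField.adjoin ((IsLocalRing.ResidueField.map ι).fieldRange)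
        {IsLocalRing.residue ↥(w.valuationSubring) ⟨RatFunc.X, hY⟩} = ⊤ := by
  set Yb := IsLocalRing.residue ↥(w.valuationSubring) ⟨RatFunc.X, hY⟩ with hYb
  constructor
  · -- transcendence
    rintro ⟨p, hp0, hpz⟩
    have hlift : ∀ i, ∃ a : v.valuationSubring,
        IsLocalRing.ResidueField.map ι (IsLocalRing.residue _ a) = ↑(p.coeff i) := by
      intro i
      obtain ⟨r, hr⟩ := (p.coeff i).2
      obtain ⟨a, ha⟩ := IsLocalRing.residue_surjective (R := v.valuationSubring) r
      exact ⟨a, by rw [ha, hr]⟩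
    choose b hb using hlift
    set N := p.natDegree with hN
    set F : Polynomial L := ∑ i ∈ Finset.range (N + 1), C ((b i : L)) * X ^ i with hFdef
    have hcoeff : ∀ i, F.coeff i = if i ∈ Finset.range (N + 1) then (b i : L) else 0 := by
      intro i
      rw [hFdef, Polynomial.finset_sum_coeff]
      simp only [Polynomial.coeff_C_mul, Polynomial.coeff_X_pow]
      rw [Finset.sum_congr rfl (fun j _ => by rw [mul_ite, mul_one, mul_zero]),
        Finset.sum_ite_eq (Finset.range (N + 1)) i fun j => (b j : L)]
    have hF : ∀ i, v (F.coeff i) ≤ 1 := by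
      intro i
      rw [hcoeff]
      split
      · exact (b i).2
      · simp
    have hFdeg : F.natDegree < N + 1 := by
      rw [Nat.lt_succ_iff, Polynomial.natDegree_le_iff_coeff_eq_zero]
      intro m hm
      rw [hcoeff, if_neg (by simpa using Nat.not_lt.mpr hm)]
    -- the residue of the corresponding element of W is aeval Yb p = 0
    have hres := gauss_aux_residue_poly v w hw ι hι hY F hF (N + 1) hFdeg
    have hterm : ∀ i ∈ Finset.range (N + 1),
        IsLocalRing.ResidueField.map ι (IsLocalRing.residue _ ⟨F.coeff i, hF i⟩) * Yb ^ i
          = ↑(p.coeff i) * Yb ^ i := by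
      intro i hi
      have hsub : (⟨F.coeff i, hF i⟩ : v.valuationSubring) = b i :=
        Subtype.ext (by show F.coeff i = (b i : L); rw [hcoeff, if_pos hi])
      rw [hsub, hb i]
    rw [Finset.sum_congr rfl hterm] at hres
    have haeval : (Polynomial.aeval Yb) p
        = ∑ i ∈ Finset.range (N + 1), (↑(p.coeff i) : ResidueField w.valuationSubring) * Yb ^ i := by
      rw [Polynomial.aeval_eq_sum_range]
      exact Finset.sum_congr rfl fun i _ => by rw [Algebra.smul_def]; rfl
    rw [← haeval, hpz] at hres
    -- but the element is a unit
    have hpN : p.coeff N ≠ 0 := by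
      rw [hN, ← Polynomial.leadingCoeff]
      exact Polynomial.leadingCoeff_ne_zero.mpr hp0
    have hbN : IsUnit (b N) := by
      by_contra h
      have hmem : b N ∈ IsLocalRing.maximalIdeal v.valuationSubring :=
        (IsLocalRing.mem_maximalIdeal _).mpr h
      have h0 : IsLocalRing.residue v.valuationSubring (b N) = 0 :=
        Ideal.Quotient.eq_zero_iff_mem.mpr hmem
      have := hb N
      rw [h0, map_zero] at this
      exact hpN (by exact_mod_cast this.symm)
    have hvbN : v (b N) = 1 := gauss_aux_unit' v (b N) hbN
    have hbN0 : (b N : L) ≠ 0 := by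
      intro h
      rw [h, v.map_zero] at hvbN
      exact zero_ne_one hvbN
    have hFN : F.coeff N = (b N : L) := by rw [hcoeff, if_pos (by simp)]
    have hF0 : F ≠ 0 := fun h => hbN0 (by rw [← hFN, h, Polynomial.coeff_zero])
    have hwF1 : w (algebraMap (Polynomial L) (RatFunc L) F) = 1 := by
      refine le_antisymm (gauss_aux_wle v w hw F hF) ?_
      rw [hw F hF0]
      have hNs : N ∈ F.support := Polynomial.mem_support_iff.mpr (by rw [hFN]; exact hbN0)
      have := Finset.le_sup' (f := fun i => v (F.coeff i)) hNs
      rwa [hFN, hvbN] at this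
    have hu : IsUnit (⟨algebraMap (Polynomial L) (RatFunc L) F,
        gauss_aux_wle v w hw F hF⟩ : w.valuationSubring) :=
      gauss_aux_unit w _ hwF1
    exact (hu.map (IsLocalRing.residue w.valuationSubring)).ne_zero hres
  · rw [IntermediateField.ext_iff]; simp only [IntermediateField.mem_top, iff_true]
    intro z
    obtain ⟨x, rfl⟩ := IsLocalRing.residue_surjective (R := w.valuationSubring) z
    by_cases hx0 : (x : RatFunc L) = 0
    · have : x = 0 := Subtype.ext hx0
      rw [this, map_zero]
      exact zero_mem _
    obtain ⟨f, hfdef⟩ : ∃ q, q = (x : RatFunc L).num := ⟨_, rfl⟩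
    obtain ⟨g, hgdef⟩ : ∃ q, q = (x : RatFunc L).denom := ⟨_, rfl⟩
    have hg : g ≠ 0 := by rw [hgdef]; exact RatFunc.denom_ne_zero _
    have hf : f ≠ 0 := by rw [hfdef]; exact RatFunc.num_ne_zero hx0
    obtain ⟨j, hj, hjsup⟩ := Finset.exists_mem_eq_sup' (Polynomial.support_nonempty.mpr hg)
      fun i => v (g.coeff i)
    obtain ⟨c, hcdef⟩ : ∃ c, c = g.coeff j := ⟨_, rfl⟩
    rw [← hcdef] at hjsup
    have hc0 : c ≠ 0 := by rw [hcdef]; exact Polynomial.mem_support_iff.mp hj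
    have hvc : v c ≠ 0 := by simpa using hc0
    have hwg : w (algebraMap (Polynomial L) (RatFunc L) g) = v c := by rw [hw g hg, hjsup]
    have hwCinv : w (algebraMap (Polynomial L) (RatFunc L) (C c⁻¹)) = (v c)⁻¹ := by
      rw [← Polynomial.algebraMap_eq,
        ← IsScalarTower.algebraMap_apply L (Polynomial L) (RatFunc L),
        gauss_aux_hwL v w hw, map_inv₀]
    have hge : algebraMap (Polynomial L) (RatFunc L) g ≠ 0 := RatFunc.algebraMap_ne_zero hg
    have hxf : algebraMap (Polynomial L) (RatFunc L) f
        = (x : RatFunc L) * algebraMap (Polynomial L) (RatFunc L) g := by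
      refine (div_eq_iff hge).mp ?_
      rw [hfdef, hgdef]
      exact RatFunc.num_div_denom (x : RatFunc L)
    have hwf : w (algebraMap (Polynomial L) (RatFunc L) f) ≤ v c := by
      rw [hxf, map_mul, ← hwg]
      calc w (x : RatFunc L) * w (algebraMap (Polynomial L) (RatFunc L) g)
          ≤ 1 * w (algebraMap (Polynomial L) (RatFunc L) g) := mul_le_mul_left x.2 _
        _ = w (algebraMap (Polynomial L) (RatFunc L) g) := one_mul _
    obtain ⟨F, hFdef⟩ : ∃ F, F = f * C c⁻¹ := ⟨_, rfl⟩
    obtain ⟨G, hGdef⟩ : ∃ G, G = g * C c⁻¹ := ⟨_, rfl⟩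
    have hwF : w (algebraMap (Polynomial L) (RatFunc L) F) ≤ 1 := by
      rw [hFdef, map_mul, map_mul, hwCinv]
      calc w (algebraMap (Polynomial L) (RatFunc L) f) * (v c)⁻¹ ≤ v c * (v c)⁻¹ := mul_le_mul_left hwf _
        _ = 1 := mul_inv_cancel₀ hvc
    have hwG : w (algebraMap (Polynomial L) (RatFunc L) G) = 1 := by
      rw [hGdef, map_mul, map_mul, hwCinv, hwg, mul_inv_cancel₀ hvc]
    have hFc : ∀ i, v (F.coeff i) ≤ 1 := gauss_aux_coeff_le v w hw F hwF
    have hGc : ∀ i, v (G.coeff i) ≤ 1 := gauss_aux_coeff_le v w hw G hwG.le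
    set P : w.valuationSubring := ⟨algebraMap (Polynomial L) (RatFunc L) F, gauss_aux_wle v w hw F hFc⟩ with hPdef
    set Q : w.valuationSubring := ⟨algebraMap (Polynomial L) (RatFunc L) G, gauss_aux_wle v w hw G hGc⟩ with hQdef
    have hPQ : x * Q = P := by
      ext
      show (x : RatFunc L) * algebraMap (Polynomial L) (RatFunc L) G = algebraMap (Polynomial L) (RatFunc L) F
      rw [hGdef, hFdef, map_mul, map_mul, ← mul_assoc, ← hxf]
    have hQu : IsUnit Q := gauss_aux_unit w Q hwG
    have hrQ : IsLocalRing.residue w.valuationSubring Q ≠ 0 :=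
      (hQu.map (IsLocalRing.residue w.valuationSubring)).ne_zero
    have hdiv : IsLocalRing.residue w.valuationSubring x
        = IsLocalRing.residue w.valuationSubring P
          / IsLocalRing.residue w.valuationSubring Q := by
      rw [eq_div_iff hrQ, ← map_mul, hPQ]
    rw [hdiv]
    exact div_mem (gauss_aux_residue_poly_mem v w hw ι hι hY F hFc)
      (gauss_aux_residue_poly_mem v w hw ι hι hY G hGc)

-- axiom check
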